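/- In a DAG, any vertex X is d-separated from each of its non-descendants (other than its parents) by its set of parents. Equivalently, for every vertex Y that is not a descendant of X and not a parent of X and not X itself, every path from X to Y is blocked by Parents(X). -/

import Mathlib

/-- Undirected adjacency induced by the directed edge relation. -/
def AdjE {V : Type*} (E : V → V → Prop) (a b : V) : Prop := E a b ∨ E b a

/-- `p` is a path (a list of distinct vertices, consecutive ones joined by an
edge in either direction) between `X` and `Y`. -/
def IsPathBetween {V : Type*} (E : V → V → Prop) (X Y : V) (p : List V) : Prop :=
  p.Chain' (fun a b => E a b ∨ E b a) ∧ p.head? = some X ∧ p.getLast? = some Y ∧ p.Nodup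

/-- `b` is an interior (non-endpoint) vertex of the path `p`. -/
def InteriorOn {V : Type*} (p : List V) (b : V) : Prop := ∃ a c, [a, b, c] <:+: p

/-- `b` is a collider on the path `p`: both adjacent edges of `p` point into `b`. -/
def ColliderOn {V : Type*} (E : V → V → Prop) (p : List V) (b : V) : Prop :=
  ∃ a c, [a, b, c] <:+: p ∧ E a b ∧ E c b

/-- `b` is a non-collider on `p`: an interior vertex that is not a collider. -/
def NonColliderOn {V : Type*} (E : V → V → Prop) (p : List V) (b : V) : Prop :=
  InteriorOn p b ∧ ¬ ColliderOn E p b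

/-- `b` is a descendant `d` relation: `Descend E b d` means there is a directed
path (possibly trivial) from `b` to `d`; in particular `b` is its own descendant. -/
def Descend {V : Type*} (E : V → V → Prop) (b d : V) : Prop := Relation.ReflTransGen E b d

/-- The path `p` is blocked by the set `Z`: it contains a non-collider in `Z`,
or a collider `b` with `b ∉ Z` and no descendant of `b` in `Z`. -/
def BlockedBy {V : Type*} (E : V → V → Prop) (p : List V) (Z : Set V) : Prop :=
  (∃ b, NonColliderOn E p b ∧ b ∈ Z) ∨
  (∃ b, ColliderOn E p b ∧ b ∉ Z ∧ ∀ d, Descend E b d → d ∉ Z)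

/-- `X` and `Y` are d-separated by `Z`: every path between them is blocked by `Z`. -/
def DSepBy {V : Type*} (E : V → V → Prop) (X Y : V) (Z : Set V) : Prop :=
  ∀ p, IsPathBetween E X Y p → BlockedBy E p Z

/-- The directed graph `E` is acyclic: no nontrivial directed path from a vertex
to itself. -/
def AcyclicRel {V : Type*} (E : V → V → Prop) : Prop := ∀ x, ¬ Relation.TransGen E x x

/-- In a nodup list `X :: v :: c :: t`, any infix triple with middle `v` starts with `X`. -/
lemma infix_middle_eq {V : Type*} {X v c a c' : V} {t : List V}
    (hnd : (X :: v :: c :: t).Nodup)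
    (h : [a, v, c'] <:+: (X :: v :: c :: t)) : a = X := by
  obtain ⟨s, t', hs⟩ := h
  match s with
  | [] =>
    simp only [List.nil_append, List.cons_append, List.cons.injEq] at hs
    exact hs.1
  | [x] =>
    simp only [List.cons_append, List.nil_append, List.cons.injEq] at hs
    have hvc : v ≠ c := by
      have := hnd.of_cons
      simp only [List.nodup_cons] at this
      intro hh; exact this.1 (hh ▸ (List.mem_cons_self : c ∈ c :: t))
    exact absurd hs.2.2.1 hvc
  | x :: y :: s'' =>
    simp only [List.cons_append, List.cons.injEq] at hs
    have hy : y = v := hs.2.1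
    have hvmem : v ∈ c :: t := by
      rw [← hs.2.2]
      simp
    have : v ∉ c :: t := by
      have := hnd.of_cons
      simp only [List.nodup_cons] at this
      exact this.1
    exact absurd hvmem this

/-- Key recursion: following forward edges from a descendant of `X` along the path,
either we reach a reversal (collider that is a descendant of X) or the end Y. -/
lemma blocked_aux {V : Type*} (E : V → V → Prop) (hacyc : AcyclicRel E) (X Y : V)
    (hdesc : ¬ Descend E X Y) (p : List V) (hlast : p.getLast? = some Y)
    (hchain : p.Chain' (fun a b => E a b ∨ E b a)) :
    ∀ rest (a b : V), (a :: b :: rest) <:+ p → E a b → Descend E X b →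
      BlockedBy E p {w | E w X} := by
  intro rest
  induction rest with
  | nil =>
    intro a b hsuf hab hXb
    exfalso
    obtain ⟨s, hs⟩ := hsuf
    rw [← hs, List.getLast?_append] at hlast
    simp at hlast
    exact hdesc (hlast ▸ hXb)
  | cons c rest' ih =>
    intro a b hsuf hab hXb
    have hchain' : List.Chain' (fun a b => E a b ∨ E b a) (a :: b :: c :: rest') :=
      hchain.suffix hsuf
    have hbc : E b c ∨ E c b := (List.isChain_cons_cons.mp (List.isChain_cons_cons.mp hchain').2).1
    rcases hbc with hbc | hcb
    · exact ih b c ((List.suffix_cons a _).trans hsuf) hbc (hXb.tail hbc)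
    · refine Or.inr ⟨b, ⟨a, c, ?_, hab, hcb⟩, ?_, ?_⟩
      · have hpre : [a, b, c] <+: (a :: b :: c :: rest') := ⟨rest', rfl⟩
        exact hpre.isInfix.trans hsuf.isInfix
      · intro hbX
        exact hacyc X (Relation.TransGen.tail' hXb hbX)
      · intro d hd hdX
        exact hacyc X (Relation.TransGen.tail' (hXb.trans hd) hdX)

/-- Local Markov property: in a DAG, any vertex X is d-separated from each of
its non-descendants (other than its parents and itself) by its set of parents. -/
theorem stmt_7 {V : Type*} [Fintype V] (E : V → V → Prop)
    (hacyc : AcyclicRel E) (X Y : V)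
    (hdesc : ¬ Descend E X Y) (hpar : ¬ E Y X) (hne : Y ≠ X) :
    DSepBy E X Y {w | E w X} := by
  intro p hp
  obtain ⟨hchain, hhead, hlast, hnd⟩ := hp
  cases p with
  | nil => simp at hhead
  | cons x rest =>
    have hx : x = X := by simpa using hhead
    subst hx
    cases rest with
    | nil =>
      exfalso
      have : x = Y := by simpa using hlast
      exact hne this.symm
    | cons v rest' =>
      have hxv : E x v ∨ E v x := (List.isChain_cons_cons.mp hchain).1
      rcases hxv with hxv | hvx
      · -- edge points out of X: follow forward edges
        exact blocked_aux E hacyc x Y hdesc _ hlast hchain rest' x v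
          (List.suffix_refl _) hxv (Relation.ReflTransGen.single hxv)
      · -- v is a parent of X
        cases rest' with
        | nil =>
          exfalso
          have hv : v = Y := by simpa using hlast
          exact hpar (hv ▸ hvx)
        | cons c t =>
          refine Or.inl ⟨v, ⟨⟨x, c, ?_⟩, ?_⟩, hvx⟩
          · exact List.IsPrefix.isInfix ⟨t, rfl⟩
          · rintro ⟨a, c', hinf, hav, -⟩
            have ha : a = x := infix_middle_eq hnd hinf
            exact hacyc x (Relation.TransGen.head (ha ▸ hav) (Relation.TransGen.single hvx))
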